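/- For every α > 0 the following holds. Set λ_n = e^{−1} + α·(log n)^{−2} and ℓ_n = ⌈(log n)^3/α⌉. Then P( there exist an integer ℓ' with ℓ_n ≤ ℓ' < 2ℓ_n and a path γ ∈ Γ_{ℓ'} with X(γ) ≤ λ_n·ℓ' and M(γ) ≥ 3·log n ) → 0 as n → ∞. -/

import Mathlib

open MeasureTheory ProbabilityTheory Filter Finset

namespace Paper

/-- A path of length `ℓ` in the complete graph on `Fin n`: a sequence of `ℓ+1` distinct
vertices. -/
abbrev Path (n ℓ : ℕ) := {v : Fin (ℓ + 1) → Fin n // Function.Injective v}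

/-- The `i`-th edge of a path. -/
def Path.edge {n ℓ : ℕ} (γ : Path n ℓ) (i : Fin ℓ) : Sym2 (Fin n) :=
  s(γ.1 i.castSucc, γ.1 i.succ)

/-- The total weight `X(γ)` of a path. -/
noncomputable def weight {n ℓ : ℕ} (ω : Sym2 (Fin n) → ℝ) (γ : Path n ℓ) : ℝ :=
  ∑ i : Fin ℓ, ω (γ.edge i)

/-- Partial sum of the first `k` edge weights of a path. -/
noncomputable def partialSum {n ℓ : ℕ} (ω : Sym2 (Fin n) → ℝ) (γ : Path n ℓ) (k : ℕ) : ℝ :=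
  ∑ i : Fin ℓ, if (i : ℕ) < k then ω (γ.edge i) else 0

/-- The deviation `M(γ) = max_{1 ≤ k ≤ ℓ} |∑_{i=1}^k X_{e_i} - (k/ℓ) X(γ)|`. -/
noncomputable def deviation {n ℓ : ℕ} (ω : Sym2 (Fin n) → ℝ) (γ : Path n ℓ) : ℝ :=
  ⨆ k : Fin ℓ, |partialSum ω γ ((k : ℕ) + 1) - (((k : ℕ) + 1 : ℝ) / ℓ) * weight ω γ|

/-- The law of the i.i.d. edge weights: each edge carries an exponential variable with
mean `n` (rate `1/n`). -/
noncomputable def P (n : ℕ) : Measure (Sym2 (Fin n) → ℝ) :=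
  Measure.pi fun _ => expMeasure ((n : ℝ)⁻¹)

/-- `L n λ ω` : the maximal `ℓ` such that some path of length `ℓ` has weight at most `λℓ`
(`0` if there is none). -/
noncomputable def L (n : ℕ) (lam : ℝ) (ω : Sym2 (Fin n) → ℝ) : ℕ :=
  sSup {ℓ : ℕ | ∃ γ : Path n ℓ, weight ω γ ≤ lam * ℓ}

/-! ### Auxiliary lemmas -/

theorem lintegral_pi_prod {ι : Type*} [Fintype ι] [DecidableEq ι]
    (μ : ι → Measure ℝ) [∀ i, IsProbabilityMeasure (μ i)]
    (f : ι → ℝ → ENNReal) (hf : ∀ i, Measurable (f i)) :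
    ∫⁻ x, ∏ i, f i (x i) ∂Measure.pi μ = ∏ i, ∫⁻ y, f i y ∂μ i := by
  have hmeas : Measurable fun (x : ι → ℝ) => ∏ i, f i (x i) :=
    Finset.measurable_prod _ fun i _ => (hf i).comp (measurable_pi_apply i)
  have key : ∀ s : Finset ι, ∀ x : ι → ℝ,
      (∫⋯∫⁻_s, (fun y => ∏ i, f i (y i)) ∂μ) x
        = (∏ i ∈ s, ∫⁻ y, f i y ∂μ i) * ∏ i ∈ sᶜ, f i (x i) := by
    intro s
    induction s using Finset.induction with
    | empty => intro x; simp
    | @insert a s ha ih =>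
      intro x
      rw [lmarginal_insert _ hmeas ha]
      have hsc : sᶜ = insert a (insert a s)ᶜ := by
        ext b; by_cases hb : b = a <;> simp [hb, ha]
      have hac : a ∉ (insert a s)ᶜ := by simp
      calc ∫⁻ t, (∫⋯∫⁻_s, (fun y => ∏ i, f i (y i)) ∂μ) (Function.update x a t) ∂μ a
          = ∫⁻ t, (∏ i ∈ s, ∫⁻ y, f i y ∂μ i) *
              ((f a t) * ∏ i ∈ (insert a s)ᶜ, f i (x i)) ∂μ a := by
            refine lintegral_congr fun t => ?_
            rw [ih]
            congr 1
            rw [hsc, Finset.prod_insert hac, Function.update_self]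
            congr 1
            refine Finset.prod_congr rfl fun b hb => ?_
            have : b ≠ a := by rintro rfl; exact hac hb
            rw [Function.update_of_ne this]
        _ = (∏ i ∈ insert a s, ∫⁻ y, f i y ∂μ i) * ∏ i ∈ (insert a s)ᶜ, f i (x i) := by
            rw [lintegral_const_mul _ ((hf a).mul_const _), lintegral_mul_const _ (hf a),
              Finset.prod_insert ha]
            ring
  have := key Finset.univ (fun _ => 0)
  simp only [Finset.compl_univ, Finset.prod_empty, mul_one] at this
  rw [lintegral_eq_lmarginal_univ (fun _ => (0:ℝ)), this]

theorem lintegral_exp_neg_expMeasure {β θ : ℝ} (hβ : 0 < β) (hθ : 0 < θ) :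
    ∫⁻ x, ENNReal.ofReal (Real.exp (-(θ * x))) ∂expMeasure β
      = ENNReal.ofReal (β / (β + θ)) := by
  have hβθ : 0 < β + θ := by linarith
  have hme : Measurable fun x : ℝ => ENNReal.ofReal (Real.exp (-(θ * x))) :=
    (measurable_const.mul measurable_id).neg.exp.ennreal_ofReal
  have hpdf : Measurable (gammaPDF 1 β) := (measurable_gammaPDFReal 1 β).ennreal_ofReal
  rw [expMeasure, gammaMeasure,
    lintegral_withDensity_eq_lintegral_mul _ hpdf hme]
  have hpt : ∀ x : ℝ, ((gammaPDF 1 β) * fun x => ENNReal.ofReal (Real.exp (-(θ * x)))) x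
      = ENNReal.ofReal (β / (β + θ)) * exponentialPDF (β + θ) x := by
    intro x
    simp only [Pi.mul_apply]
    rcases lt_or_ge x 0 with hx | hx
    · rw [gammaPDF_of_neg hx, exponentialPDF_of_neg hx, zero_mul, mul_zero]
    · have h1 : gammaPDF 1 β x = ENNReal.ofReal (β * Real.exp (-(β * x))) := by
        rw [show gammaPDF 1 β x = exponentialPDF β x from rfl, exponentialPDF_of_nonneg hx]
      rw [h1, exponentialPDF_of_nonneg hx, ← ENNReal.ofReal_mul (by positivity),
        ← ENNReal.ofReal_mul (by positivity)]
      congr 1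
      have he : Real.exp (-(β * x)) * Real.exp (-(θ * x)) = Real.exp (-((β + θ) * x)) := by
        rw [← Real.exp_add]; ring_nf
      rw [mul_assoc, he]
      field_simp
  have hii : ∫⁻ x, ((gammaPDF 1 β) * fun x => ENNReal.ofReal (Real.exp (-(θ * x)))) x
      = ∫⁻ x, ENNReal.ofReal (β / (β + θ)) * exponentialPDF (β + θ) x :=
    lintegral_congr hpt
  have hpdf2 : Measurable (exponentialPDF (β + θ)) :=
    (measurable_exponentialPDFReal (β + θ)).ennreal_ofReal
  rw [hii, lintegral_const_mul _ hpdf2, lintegral_exponentialPDF_eq_one hβθ, mul_one]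

theorem edge_inj {n ℓ : ℕ} (γ : Path n ℓ) : Function.Injective γ.edge := by
  intro i j h
  simp only [Path.edge, Sym2.eq_iff] at h
  rcases h with ⟨h1, _⟩ | ⟨h1, h2⟩
  · exact Fin.castSucc_injective _ (γ.2 h1)
  · have e1 := γ.2 h1
    have e2 := γ.2 h2
    have v1 : (i : ℕ) = (j : ℕ) + 1 := by
      have := congrArg Fin.val e1; simpa using this
    have v2 : (i : ℕ) + 1 = (j : ℕ) := by
      have := congrArg Fin.val e2; simpa using this
    omega

theorem measurable_weight {n ℓ : ℕ} (γ : Path n ℓ) :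
    Measurable fun ω : Sym2 (Fin n) → ℝ => weight ω γ :=
  Finset.measurable_sum _ fun i _ => measurable_pi_apply (γ.edge i)

theorem chernoff {n ℓ : ℕ} (hn : 0 < n) (γ : Path n ℓ) {a θ : ℝ} (hθ : 0 < θ) :
    P n {ω | weight ω γ ≤ a} ≤ ENNReal.ofReal (Real.exp (θ * a)) *
      ENNReal.ofReal ((n : ℝ)⁻¹ / ((n : ℝ)⁻¹ + θ)) ^ ℓ := by
  classical
  set β : ℝ := (n : ℝ)⁻¹ with hβdef
  have hβ : 0 < β := by positivity
  haveI : IsProbabilityMeasure (expMeasure β) := isProbabilityMeasure_expMeasure hβ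
  set T : Finset (Sym2 (Fin n)) := Finset.image γ.edge Finset.univ with hT
  set h : Sym2 (Fin n) → ℝ → ENNReal :=
    fun e x => if e ∈ T then ENNReal.ofReal (Real.exp (-(θ * x))) else 1 with hh
  have hhm : ∀ e, Measurable (h e) := by
    intro e
    by_cases he : e ∈ T <;> simp only [hh, he, if_true, if_false]
    · exact (measurable_const.mul measurable_id).neg.exp.ennreal_ofReal
    · exact measurable_const
  have hS : MeasurableSet {ω : Sym2 (Fin n) → ℝ | weight ω γ ≤ a} :=
    measurableSet_le (measurable_weight γ) measurable_const
  have stepA : P n {ω | weight ω γ ≤ a} ≤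
      ∫⁻ ω, ENNReal.ofReal (Real.exp (θ * (a - weight ω γ))) ∂P n := by
    rw [← lintegral_indicator_one hS]
    refine lintegral_mono fun ω => ?_
    by_cases hω : ω ∈ {ω | weight ω γ ≤ a}
    · rw [Set.indicator_of_mem hω]
      refine ENNReal.one_le_ofReal.2 (Real.one_le_exp ?_)
      have : weight ω γ ≤ a := hω
      nlinarith
    · rw [Set.indicator_of_notMem hω]; exact zero_le
  have stepB : ∀ ω : Sym2 (Fin n) → ℝ,
      ENNReal.ofReal (Real.exp (θ * (a - weight ω γ)))
        = ENNReal.ofReal (Real.exp (θ * a)) * ∏ e : Sym2 (Fin n), h e (ω e) := by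
    intro ω
    have e1 : θ * (a - weight ω γ) = θ * a + ∑ i : Fin ℓ, -(θ * ω (γ.edge i)) := by
      simp only [weight, Finset.sum_neg_distrib, ← Finset.mul_sum]
      ring
    rw [e1, Real.exp_add, ENNReal.ofReal_mul (Real.exp_nonneg _), Real.exp_sum]
    congr 1
    rw [ENNReal.ofReal_prod_of_nonneg (fun i _ => Real.exp_nonneg _)]
    have h2 : ∏ e : Sym2 (Fin n), h e (ω e)
        = ∏ e ∈ T, ENNReal.ofReal (Real.exp (-(θ * ω e))) := by
      simp only [hh]
      rw [Finset.prod_ite_mem, Finset.univ_inter]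
    rw [h2, hT, Finset.prod_image (fun i _ j _ hij => edge_inj γ hij)]
  have stepC : ∫⁻ ω, ∏ e : Sym2 (Fin n), h e (ω e) ∂P n
      = ENNReal.ofReal (β / (β + θ)) ^ ℓ := by
    rw [P, lintegral_pi_prod _ h hhm]
    have hcard : T.card = ℓ := by
      rw [hT, Finset.card_image_of_injective _ (edge_inj γ), Finset.card_univ, Fintype.card_fin]
    have hint : ∀ e : Sym2 (Fin n), ∫⁻ y, h e y ∂expMeasure β
        = if e ∈ T then ENNReal.ofReal (β / (β + θ)) else 1 := by
      intro e
      by_cases he : e ∈ T <;> simp only [hh, he, if_true, if_false]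
      · exact lintegral_exp_neg_expMeasure hβ hθ
      · simp
    calc ∏ e : Sym2 (Fin n), ∫⁻ y, h e y ∂expMeasure β
        = ∏ e : Sym2 (Fin n), (if e ∈ T then ENNReal.ofReal (β / (β + θ)) else 1) :=
          Finset.prod_congr rfl fun e _ => hint e
      _ = ∏ _e ∈ T, ENNReal.ofReal (β / (β + θ)) := by
          rw [Finset.prod_ite_mem, Finset.univ_inter]
      _ = ENNReal.ofReal (β / (β + θ)) ^ ℓ := by
          rw [Finset.prod_const, hcard]
  calc P n {ω | weight ω γ ≤ a}
      ≤ ∫⁻ ω, ENNReal.ofReal (Real.exp (θ * (a - weight ω γ))) ∂P n := stepA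
    _ = ∫⁻ ω, ENNReal.ofReal (Real.exp (θ * a)) * ∏ e : Sym2 (Fin n), h e (ω e) ∂P n :=
        lintegral_congr stepB
    _ = ENNReal.ofReal (Real.exp (θ * a)) * ∫⁻ ω, ∏ e : Sym2 (Fin n), h e (ω e) ∂P n := by
        rw [lintegral_const_mul]
        exact Finset.measurable_prod _ fun e _ => (hhm e).comp (measurable_pi_apply e)
    _ = ENNReal.ofReal (Real.exp (θ * a)) * ENNReal.ofReal (β / (β + θ)) ^ ℓ := by rw [stepC]

theorem sum_ite_lt {ℓ k : ℕ} (h : k ≤ ℓ) (f : Fin ℓ → ℝ) :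
    (∑ i : Fin ℓ, if (i : ℕ) < k then f i else 0)
      = ∑ i : Fin k, f (Fin.castLE h i) := by
  classical
  set F : ℕ → ℝ := fun m => if hm : m < ℓ then f ⟨m, hm⟩ else 0 with hF
  have hL : (∑ i : Fin ℓ, if (i : ℕ) < k then f i else 0)
      = ∑ m ∈ Finset.range ℓ, (if m < k then F m else 0) := by
    rw [← Fin.sum_univ_eq_sum_range (fun m => if m < k then F m else 0) ℓ]
    refine Finset.sum_congr rfl fun i _ => ?_
    by_cases hik : (i : ℕ) < k <;> simp [hik, hF, i.isLt]
  have hR : (∑ i : Fin k, f (Fin.castLE h i)) = ∑ m ∈ Finset.range k, F m := by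
    rw [← Fin.sum_univ_eq_sum_range F k]
    refine Finset.sum_congr rfl fun i _ => ?_
    have : (i : ℕ) < ℓ := lt_of_lt_of_le i.isLt h
    simp [hF, this, Fin.castLE]
  rw [hL, hR, ← Finset.sum_filter]
  congr 1
  ext m
  simp only [Finset.mem_filter, Finset.mem_range]
  omega

theorem sum_ite_ge {ℓ k : ℕ} (h : k ≤ ℓ) (f : Fin ℓ → ℝ) :
    (∑ i : Fin ℓ, if (i : ℕ) < k then 0 else f i)
      = ∑ i : Fin (ℓ - k), f ⟨k + (i : ℕ), by omega⟩ := by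
  classical
  set F : ℕ → ℝ := fun m => if hm : m < ℓ then f ⟨m, hm⟩ else 0 with hF
  have hL : (∑ i : Fin ℓ, if (i : ℕ) < k then 0 else f i)
      = ∑ m ∈ Finset.range ℓ, (if m < k then 0 else F m) := by
    rw [← Fin.sum_univ_eq_sum_range (fun m => if m < k then 0 else F m) ℓ]
    refine Finset.sum_congr rfl fun i _ => ?_
    by_cases hik : (i : ℕ) < k <;> simp [hik, hF, i.isLt]
  have hR : (∑ i : Fin (ℓ - k), f ⟨k + (i : ℕ), by omega⟩)
      = ∑ m ∈ Finset.range (ℓ - k), F (k + m) := by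
    rw [← Fin.sum_univ_eq_sum_range (fun m => F (k + m)) (ℓ - k)]
    refine Finset.sum_congr rfl fun i _ => ?_
    have : k + (i : ℕ) < ℓ := by omega
    simp [hF, this]
  rw [hL, hR, ← Finset.sum_Ico_eq_sum_range]
  have hpt : ∀ m, (if m < k then 0 else F m) = (if ¬ m < k then F m else 0) := by
    intro m; by_cases hm : m < k <;> simp [hm]
  simp only [hpt]
  rw [← Finset.sum_filter]
  congr 1
  ext m
  simp only [Finset.mem_filter, Finset.mem_range, Finset.mem_Ico]
  omega

def prefixPath {n ℓ : ℕ} (γ : Path n ℓ) (k : ℕ) (h : k ≤ ℓ) : Path n k :=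
  ⟨fun i => γ.1 (Fin.castLE (by omega) i),
   fun i j hij => Fin.castLE_injective (by omega) (γ.2 hij)⟩

theorem prefixPath_edge {n ℓ : ℕ} (γ : Path n ℓ) (k : ℕ) (h : k ≤ ℓ) (i : Fin k) :
    (prefixPath γ k h).edge i = γ.edge (Fin.castLE h i) := rfl

theorem weight_prefixPath {n ℓ : ℕ} (ω : Sym2 (Fin n) → ℝ) (γ : Path n ℓ) (k : ℕ) (h : k ≤ ℓ) :
    weight ω (prefixPath γ k h) = partialSum ω γ k := by
  simp only [weight, partialSum, prefixPath_edge]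
  rw [sum_ite_lt h (fun i => ω (γ.edge i))]

def suffixPath {n ℓ : ℕ} (γ : Path n ℓ) (k : ℕ) (h : k ≤ ℓ) : Path n (ℓ - k) :=
  ⟨fun i => γ.1 ⟨k + (i : ℕ), by omega⟩,
   fun i j hij => by
    have := γ.2 hij
    have hv : k + (i : ℕ) = k + (j : ℕ) := congrArg Fin.val this
    exact Fin.ext (by omega)⟩

theorem suffixPath_edge {n ℓ : ℕ} (γ : Path n ℓ) (k : ℕ) (h : k ≤ ℓ) (i : Fin (ℓ - k)) :
    (suffixPath γ k h).edge i = γ.edge ⟨k + (i : ℕ), by omega⟩ := rfl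

theorem weight_suffixPath {n ℓ : ℕ} (ω : Sym2 (Fin n) → ℝ) (γ : Path n ℓ) (k : ℕ) (h : k ≤ ℓ) :
    weight ω (suffixPath γ k h) = weight ω γ - partialSum ω γ k := by
  simp only [weight, partialSum, suffixPath_edge]
  rw [← Finset.sum_sub_distrib]
  have hpt : ∀ i : Fin ℓ, ω (γ.edge i) - (if (i : ℕ) < k then ω (γ.edge i) else 0)
      = (if (i : ℕ) < k then 0 else ω (γ.edge i)) := by
    intro i; by_cases hi : (i : ℕ) < k <;> simp [hi]
  simp only [hpt]
  rw [sum_ite_ge h (fun i => ω (γ.edge i))]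

theorem partialSum_top {n ℓ : ℕ} (ω : Sym2 (Fin n) → ℝ) (γ : Path n ℓ) :
    partialSum ω γ ℓ = weight ω γ := by
  simp only [partialSum, weight]
  exact Finset.sum_congr rfl fun i _ => by simp [i.isLt]

/-- Key inclusion: the bad event implies the existence of a short very light path. -/
theorem event_subset {n : ℕ} (lam m : ℝ) (hm : 0 < m) (ℓmax : ℕ)
    {ℓ' : ℕ} (hub : ℓ' < ℓmax) (ω : Sym2 (Fin n) → ℝ) (γ : Path n ℓ')
    (hw : weight ω γ ≤ lam * ℓ') (hd : m ≤ deviation ω γ) :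
    ∃ j : ℕ, j < ℓmax ∧ ∃ δ : Path n j, weight ω δ ≤ lam * j - m := by
  rcases Nat.eq_zero_or_pos ℓ' with rfl | hpos
  · exfalso
    rw [deviation, iSup_of_empty', Real.sSup_empty] at hd
    linarith
  have : Nonempty (Fin ℓ') := ⟨⟨0, hpos⟩⟩
  obtain ⟨k, hk⟩ := exists_eq_ciSup_of_finite
    (f := fun k : Fin ℓ' => |partialSum ω γ ((k : ℕ) + 1) - (((k : ℕ) + 1 : ℝ) / ℓ') * weight ω γ|)
  rw [deviation, ← hk] at hd
  set K : ℕ := (k : ℕ) + 1 with hK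
  have hKle : K ≤ ℓ' := k.isLt
  have hl0 : (0 : ℝ) < (ℓ' : ℝ) := by exact_mod_cast hpos
  have hcast : ((k : ℕ) : ℝ) + 1 = (K : ℝ) := by rw [hK]; push_cast; ring
  rw [hcast] at hd
  set W : ℝ := weight ω γ with hW
  set S : ℝ := partialSum ω γ K with hS
  rcases le_abs.1 hd with hcase | hcase
  · have hKlt : K < ℓ' := by
      rcases eq_or_lt_of_le hKle with heq | hlt; swap; · exact hlt
      exfalso
      rw [hS, heq, partialSum_top, div_self (ne_of_gt hl0), one_mul] at hcase
      rw [hW] at hcase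
      linarith
    refine ⟨ℓ' - K, by omega, suffixPath γ K hKle, ?_⟩
    rw [weight_suffixPath, ← hW, ← hS]
    have hfrac : (0:ℝ) ≤ 1 - (K : ℝ) / ℓ' := by
      rw [sub_nonneg, div_le_one hl0]
      exact_mod_cast le_of_lt hKlt
    have h2 : (1 - (K : ℝ) / ℓ') * W ≤ (1 - (K : ℝ) / ℓ') * (lam * ℓ') :=
      mul_le_mul_of_nonneg_left hw hfrac
    have h3 : (1 - (K : ℝ) / ℓ') * (lam * ℓ') = lam * ((ℓ' : ℝ) - K) := by
      field_simp
    have h4 : ((ℓ' - K : ℕ) : ℝ) = (ℓ' : ℝ) - K := by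
      rw [Nat.cast_sub hKle]
    rw [h4]
    nlinarith [hcase]
  · refine ⟨K, by omega, prefixPath γ K hKle, ?_⟩
    rw [weight_prefixPath, ← hS]
    have hfrac : (0:ℝ) ≤ (K : ℝ) / ℓ' := by positivity
    have h2 : ((K : ℝ) / ℓ') * W ≤ ((K : ℝ) / ℓ') * (lam * ℓ') :=
      mul_le_mul_of_nonneg_left hw hfrac
    have h3 : ((K : ℝ) / ℓ') * (lam * ℓ') = lam * K := by
      field_simp
    nlinarith [hcase]

theorem card_path_le (n ℓ : ℕ) :
    (Fintype.card (Path n ℓ) : ℝ) ≤ (n : ℝ) ^ (ℓ + 1) := by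
  classical
  have h1 : Fintype.card (Path n ℓ) ≤ Fintype.card (Fin (ℓ + 1) → Fin n) :=
    Fintype.card_subtype_le _
  have h2 : Fintype.card (Fin (ℓ + 1) → Fin n) = n ^ (ℓ + 1) := by
    rw [Fintype.card_fun, Fintype.card_fin, Fintype.card_fin]
  calc (Fintype.card (Path n ℓ) : ℝ) ≤ ((n ^ (ℓ + 1) : ℕ) : ℝ) := by
        exact_mod_cast h2 ▸ h1
    _ = (n : ℝ) ^ (ℓ + 1) := by push_cast; ring

/-- The real-valued per-`j` term bound. -/
theorem term_bound {n j M : ℕ} {lam m : ℝ} (hn : 0 < n) (hlam : Real.exp (-1) ≤ lam)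
    (hlam0 : 0 < lam) (hm : 0 ≤ m) (hj : j ≤ M) :
    (n : ℝ) ^ (j + 1) * (Real.exp (lam⁻¹ * (lam * j - m)) *
        ((n : ℝ)⁻¹ / ((n : ℝ)⁻¹ + lam⁻¹)) ^ j)
      ≤ (n : ℝ) * Real.exp (-(lam⁻¹ * m)) * (Real.exp 1 * lam) ^ M := by
  have hN : (0 : ℝ) < n := by exact_mod_cast hn
  set q : ℝ := (n : ℝ)⁻¹ / ((n : ℝ)⁻¹ + lam⁻¹) with hq
  have hθ : (0 : ℝ) < lam⁻¹ := by positivity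
  have hq0 : 0 ≤ q := by positivity
  have hqle : (n : ℝ) * q ≤ lam := by
    have h1 : q ≤ (n : ℝ)⁻¹ / lam⁻¹ := by
      apply div_le_div_of_nonneg_left (by positivity) hθ
      linarith [inv_pos.2 hN]
    have h2 : (n : ℝ)⁻¹ / lam⁻¹ = (n : ℝ)⁻¹ * lam := by
      field_simp
    calc (n : ℝ) * q ≤ (n : ℝ) * ((n : ℝ)⁻¹ * lam) := by
          rw [← h2]; exact mul_le_mul_of_nonneg_left h1 (le_of_lt hN)
      _ = lam := by field_simp
  have hexp : Real.exp (lam⁻¹ * (lam * j - m))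
      = Real.exp 1 ^ j * Real.exp (-(lam⁻¹ * m)) := by
    have : lam⁻¹ * (lam * j - m) = (j : ℝ) * 1 + (-(lam⁻¹ * m)) := by
      field_simp
      ring
    rw [this, Real.exp_add, Real.exp_nat_mul]
  have h1elam : (1 : ℝ) ≤ Real.exp 1 * lam := by
    calc (1 : ℝ) = Real.exp 1 * Real.exp (-1) := by
          rw [← Real.exp_add]; norm_num
      _ ≤ Real.exp 1 * lam := mul_le_mul_of_nonneg_left hlam (Real.exp_nonneg 1)
  calc (n : ℝ) ^ (j + 1) * (Real.exp (lam⁻¹ * (lam * j - m)) * q ^ j)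
      = (n : ℝ) * Real.exp (-(lam⁻¹ * m)) * ((n : ℝ) * (Real.exp 1 * q)) ^ j := by
        rw [hexp, pow_succ, mul_pow, mul_pow]
        ring
    _ ≤ (n : ℝ) * Real.exp (-(lam⁻¹ * m)) * (Real.exp 1 * lam) ^ j := by
        apply mul_le_mul_of_nonneg_left _ (by positivity)
        apply pow_le_pow_left₀ (by positivity)
        calc (n : ℝ) * (Real.exp 1 * q) = Real.exp 1 * ((n : ℝ) * q) := by ring
          _ ≤ Real.exp 1 * lam := mul_le_mul_of_nonneg_left hqle (Real.exp_nonneg 1)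
    _ ≤ (n : ℝ) * Real.exp (-(lam⁻¹ * m)) * (Real.exp 1 * lam) ^ M := by
        apply mul_le_mul_of_nonneg_left _ (by positivity)
        exact pow_le_pow_right₀ h1elam hj

/-! ### The explicit upper bound and its asymptotics -/

noncomputable def Breal (α : ℝ) (n : ℕ) : ℝ :=
  ((2 * ⌈(Real.log n) ^ 3 / α⌉₊ : ℕ) : ℝ) *
    ((n : ℝ) *
        Real.exp (-((Real.exp (-1) + α * ((Real.log n) ^ 2)⁻¹)⁻¹ * (3 * Real.log n))) *
      (Real.exp 1 * (Real.exp (-1) + α * ((Real.log n) ^ 2)⁻¹)) ^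
        (2 * ⌈(Real.log n) ^ 3 / α⌉₊))

theorem breal_nonneg (α : ℝ) (hα : 0 < α) (n : ℕ) : 0 ≤ Breal α n := by
  unfold Breal
  positivity

theorem measure_bound (α : ℝ) (hα : 0 < α) (n : ℕ) (hn2 : 2 ≤ n) :
    P n {ω | ∃ ℓ' : ℕ, ⌈(Real.log n) ^ 3 / α⌉₊ ≤ ℓ' ∧ ℓ' < 2 * ⌈(Real.log n) ^ 3 / α⌉₊ ∧
          ∃ γ : Path n ℓ',
            weight ω γ ≤ (Real.exp (-1) + α * ((Real.log n) ^ 2)⁻¹) * ℓ' ∧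
            3 * Real.log n ≤ deviation ω γ}
      ≤ ENNReal.ofReal (Breal α n) := by
  classical
  have hn0 : 0 < n := by omega
  have hn1R : (1 : ℝ) < (n : ℝ) := by exact_mod_cast hn2
  have hLpos : 0 < Real.log n := Real.log_pos hn1R
  set lam : ℝ := Real.exp (-1) + α * ((Real.log n) ^ 2)⁻¹ with hlamdef
  set m : ℝ := 3 * Real.log n with hmdef
  set M : ℕ := 2 * ⌈(Real.log n) ^ 3 / α⌉₊ with hMdef
  have hlam0 : 0 < lam := by rw [hlamdef]; positivity
  have hlamexp : Real.exp (-1) ≤ lam := by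
    rw [hlamdef]
    have : 0 ≤ α * ((Real.log n) ^ 2)⁻¹ := by positivity
    linarith
  have hm : 0 < m := by rw [hmdef]; linarith
  have hθ : 0 < lam⁻¹ := by positivity
  -- the inclusion
  have hsub : {ω : Sym2 (Fin n) → ℝ | ∃ ℓ' : ℕ, ⌈(Real.log n) ^ 3 / α⌉₊ ≤ ℓ' ∧
        ℓ' < 2 * ⌈(Real.log n) ^ 3 / α⌉₊ ∧ ∃ γ : Path n ℓ',
          weight ω γ ≤ lam * ℓ' ∧ m ≤ deviation ω γ}
      ⊆ ⋃ (j : Fin M), ⋃ (δ : Path n (j : ℕ)),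
          {ω | weight ω δ ≤ lam * (j : ℕ) - m} := by
    intro ω hω
    obtain ⟨ℓ', _, hub, γ, hw, hd⟩ := hω
    have hub' : ℓ' < M := by rw [hMdef]; exact hub
    obtain ⟨j, hjM, δ, hδ⟩ := event_subset lam m hm M hub' ω γ hw hd
    exact Set.mem_iUnion.2 ⟨⟨j, hjM⟩, Set.mem_iUnion.2 ⟨δ, hδ⟩⟩
  -- per-j bound
  set u : ℝ := (n : ℝ) * Real.exp (-(lam⁻¹ * m)) * (Real.exp 1 * lam) ^ M with hu
  have hqnn : (0:ℝ) ≤ (n : ℝ)⁻¹ / ((n : ℝ)⁻¹ + lam⁻¹) := by positivity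
  have hperj : ∀ j : Fin M, P n (⋃ (δ : Path n (j : ℕ)),
      {ω | weight ω δ ≤ lam * (j : ℕ) - m}) ≤ ENNReal.ofReal u := by
    intro j
    calc P n (⋃ (δ : Path n (j : ℕ)), {ω | weight ω δ ≤ lam * (j : ℕ) - m})
        ≤ ∑' (δ : Path n (j : ℕ)), P n {ω | weight ω δ ≤ lam * (j : ℕ) - m} :=
          measure_iUnion_le _
      _ = ∑ (δ : Path n (j : ℕ)), P n {ω | weight ω δ ≤ lam * (j : ℕ) - m} := tsum_fintype _
      _ ≤ ∑ (_x : Path n (j : ℕ)), (ENNReal.ofReal (Real.exp (lam⁻¹ * (lam * (j : ℕ) - m))) *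
            ENNReal.ofReal ((n : ℝ)⁻¹ / ((n : ℝ)⁻¹ + lam⁻¹)) ^ (j : ℕ)) :=
          Finset.sum_le_sum fun δ _ => chernoff hn0 δ hθ
      _ = (Fintype.card (Path n (j : ℕ)) : ENNReal) *
            (ENNReal.ofReal (Real.exp (lam⁻¹ * (lam * (j : ℕ) - m))) *
              ENNReal.ofReal ((n : ℝ)⁻¹ / ((n : ℝ)⁻¹ + lam⁻¹)) ^ (j : ℕ)) := by
          rw [Finset.sum_const, Finset.card_univ, nsmul_eq_mul]
      _ ≤ ENNReal.ofReal ((n : ℝ) ^ ((j : ℕ) + 1)) *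
            (ENNReal.ofReal (Real.exp (lam⁻¹ * (lam * (j : ℕ) - m))) *
              ENNReal.ofReal ((n : ℝ)⁻¹ / ((n : ℝ)⁻¹ + lam⁻¹)) ^ (j : ℕ)) := by
          apply mul_le_mul_left
          rw [← ENNReal.ofReal_natCast]
          exact ENNReal.ofReal_le_ofReal (card_path_le n _)
      _ = ENNReal.ofReal ((n : ℝ) ^ ((j : ℕ) + 1) *
            (Real.exp (lam⁻¹ * (lam * (j : ℕ) - m)) *
              ((n : ℝ)⁻¹ / ((n : ℝ)⁻¹ + lam⁻¹)) ^ (j : ℕ))) := by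
          rw [← ENNReal.ofReal_pow hqnn, ← ENNReal.ofReal_mul (Real.exp_nonneg _),
            ← ENNReal.ofReal_mul (by positivity)]
      _ ≤ ENNReal.ofReal u := by
          apply ENNReal.ofReal_le_ofReal
          rw [hu]
          exact term_bound hn0 hlamexp hlam0 (le_of_lt hm) (le_of_lt j.isLt)
  calc P n {ω | ∃ ℓ' : ℕ, ⌈(Real.log n) ^ 3 / α⌉₊ ≤ ℓ' ∧
        ℓ' < M ∧ ∃ γ : Path n ℓ',
          weight ω γ ≤ lam * ℓ' ∧ m ≤ deviation ω γ}
      ≤ P n (⋃ (j : Fin M), ⋃ (δ : Path n (j : ℕ)),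
          {ω | weight ω δ ≤ lam * (j : ℕ) - m}) := measure_mono hsub
    _ ≤ ∑' (j : Fin M), P n (⋃ (δ : Path n (j : ℕ)),
          {ω | weight ω δ ≤ lam * (j : ℕ) - m}) := measure_iUnion_le _
    _ ≤ ∑' (_ : Fin M), ENNReal.ofReal u := ENNReal.tsum_le_tsum fun j => hperj j
    _ = (M : ENNReal) * ENNReal.ofReal u := by
        rw [tsum_fintype, Finset.sum_const, Finset.card_univ, Fintype.card_fin, nsmul_eq_mul]
    _ = ENNReal.ofReal ((M : ℝ) * u) := by
        rw [ENNReal.ofReal_mul (show (0:ℝ) ≤ (M : ℝ) by positivity), ENNReal.ofReal_natCast]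
    _ = ENNReal.ofReal (Breal α n) := by
        rw [Breal, hu, hmdef, hlamdef, hMdef]

noncomputable def Hfun (α : ℝ) (x : ℝ) : ℝ :=
  Real.log (2 * x ^ 3 / α + 2) +
    (x + (-(3 * Real.exp 1 * x) + 3 * (Real.exp 1) ^ 2 * α / x) +
      (2 * Real.exp 1 * x + 2 * Real.exp 1 * α / x ^ 2))

theorem Hfun_tendsto (α : ℝ) (hα : 0 < α) : Tendsto (Hfun α) atTop atBot := by
  have hE1 : (1 : ℝ) < Real.exp 1 := by
    have := Real.exp_one_gt_d9; linarith
  set E : ℝ := Real.exp 1 with hE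
  set C : ℝ := 3 * E ^ 2 * α + 2 * E * α with hC
  -- step 1 : eventual bound by 4 log x + (1-E) x + C
  have h1 : ∀ᶠ x : ℝ in atTop, Hfun α x ≤ 4 * Real.log x + (1 - E) * x + C := by
    filter_upwards [eventually_ge_atTop (1 : ℝ), eventually_ge_atTop (2 / α + 2)]
      with x hx1 hx2
    have hx0 : (0 : ℝ) < x := by linarith
    have hcube : (1 : ℝ) ≤ x ^ 3 := by nlinarith [hx1, sq_nonneg x, sq_nonneg (x - 1)]
    have harg : 2 * x ^ 3 / α + 2 ≤ x ^ 4 := by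
      have h4 : x ^ 4 = x ^ 3 * x := by ring
      have : x ^ 3 * x ≥ x ^ 3 * (2 / α + 2) :=
        mul_le_mul_of_nonneg_left hx2 (by positivity)
      have hexp : x ^ 3 * (2 / α + 2) = 2 * x ^ 3 / α + 2 * x ^ 3 := by ring
      nlinarith
    have hlog : Real.log (2 * x ^ 3 / α + 2) ≤ 4 * Real.log x := by
      calc Real.log (2 * x ^ 3 / α + 2) ≤ Real.log (x ^ 4) :=
            Real.log_le_log (by positivity) harg
        _ = 4 * Real.log x := by rw [Real.log_pow]; push_cast; ring
    have hd1 : 3 * E ^ 2 * α / x ≤ 3 * E ^ 2 * α := by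
      apply div_le_self (by positivity) hx1
    have hd2 : 2 * E * α / x ^ 2 ≤ 2 * E * α := by
      apply div_le_self (by positivity)
      nlinarith
    rw [Hfun, hC]
    linarith
  -- step 2 : kill the log
  have h2 : ∀ᶠ x : ℝ in atTop, 4 * Real.log x ≤ (E - 1) / 2 * x := by
    have hlo := Real.isLittleO_log_id_atTop.def (c := (E - 1) / 8) (by linarith)
    filter_upwards [hlo, eventually_ge_atTop (0 : ℝ)] with x hx hx0
    have : |Real.log x| ≤ (E - 1) / 8 * |x| := by
      simpa [Real.norm_eq_abs] using hx
    have h4 : Real.log x ≤ (E - 1) / 8 * x := by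
      rw [abs_of_nonneg hx0] at this
      calc Real.log x ≤ |Real.log x| := le_abs_self _
        _ ≤ (E - 1) / 8 * x := this
    linarith
  -- combine
  have h3 : ∀ᶠ x : ℝ in atTop, Hfun α x ≤ (1 - E) / 2 * x + C := by
    filter_upwards [h1, h2] with x hx1 hx2
    calc Hfun α x ≤ 4 * Real.log x + (1 - E) * x + C := hx1
      _ ≤ (E - 1) / 2 * x + (1 - E) * x + C := by linarith
      _ = (1 - E) / 2 * x + C := by ring
  apply tendsto_atBot_mono' atTop h3
  apply tendsto_atBot_add_const_right
  exact (tendsto_const_mul_atBot_of_neg (by linarith)).2 tendsto_id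

theorem breal_tendsto (α : ℝ) (hα : 0 < α) : Tendsto (Breal α) atTop (nhds 0) := by
  have hE1 : (1 : ℝ) < Real.exp 1 := by
    have := Real.exp_one_gt_d9; linarith
  set E : ℝ := Real.exp 1 with hE
  have hub : ∀ᶠ n : ℕ in atTop, Breal α n ≤ Real.exp (Hfun α (Real.log n)) := by
    filter_upwards [eventually_ge_atTop 3] with n hn3
    have hn0 : (0 : ℝ) < n := by positivity
    have hn3R : (3 : ℝ) ≤ (n : ℝ) := by exact_mod_cast hn3
    have hL1 : (1 : ℝ) ≤ Real.log n := by
      rw [Real.le_log_iff_exp_le (by linarith)]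
      calc Real.exp 1 ≤ 2.7182818286 := le_of_lt Real.exp_one_lt_d9
        _ ≤ (n : ℝ) := by linarith
    set x : ℝ := Real.log n with hx
    have hx0 : (0 : ℝ) < x := by linarith
    set lam : ℝ := Real.exp (-1) + α * (x ^ 2)⁻¹ with hlamdef
    have hlam0 : 0 < lam := by rw [hlamdef]; positivity
    have hlamE : E * lam = 1 + E * α / x ^ 2 := by
      rw [hlamdef, hE, mul_add, ← Real.exp_add]
      norm_num
      ring
    set l : ℕ := ⌈x ^ 3 / α⌉₊ with hl
    -- factor bounds
    have hceil : ((2 * l : ℕ) : ℝ) ≤ 2 * x ^ 3 / α + 2 := by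
      have h := Nat.ceil_lt_add_one (show (0:ℝ) ≤ x ^ 3 / α by positivity)
      push_cast
      rw [hl]
      push_cast
      have h2 : (2 * x ^ 3) / α = 2 * (x ^ 3 / α) := by ring
      linarith [h]
    have hA : ((2 * l : ℕ) : ℝ) ≤ Real.exp (Real.log (2 * x ^ 3 / α + 2)) := by
      rw [Real.exp_log (by positivity)]
      exact hceil
    have hB : (n : ℝ) = Real.exp x := by
      rw [hx, Real.exp_log hn0]
    have hCkey : 3 * E * x - 3 * E ^ 2 * α / x ≤ lam⁻¹ * (3 * x) := by
      set u : ℝ := E * α / x ^ 2 with hudef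
      have hu0 : 0 ≤ u := by rw [hudef]; positivity
      have hfact : (3 * E * x - 3 * E ^ 2 * α / x) * lam = 3 * x * (1 - u ^ 2) := by
        have h1 : 3 * E * x - 3 * E ^ 2 * α / x = 3 * E * x * (1 - u) := by
          rw [hudef]; field_simp
        have h2 : 3 * E * x * (1 - u) * lam = 3 * x * (E * lam) * (1 - u) := by ring
        rw [h1, h2, hlamE, hudef]
        ring
      rw [show lam⁻¹ * (3 * x) = 3 * x / lam by field_simp, le_div_iff₀ hlam0, hfact]
      nlinarith [sq_nonneg u, hx0, hu0]
    have hC : Real.exp (-(lam⁻¹ * (3 * x)))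
        ≤ Real.exp (-(3 * E * x) + 3 * E ^ 2 * α / x) := by
      apply Real.exp_le_exp.2
      linarith
    have hD : (E * lam) ^ (2 * l) ≤ Real.exp (2 * E * x + 2 * E * α / x ^ 2) := by
      have h1 : E * lam ≤ Real.exp (E * α / x ^ 2) := by
        rw [hlamE]
        have := Real.add_one_le_exp (E * α / x ^ 2)
        linarith
      have h2 : (E * lam) ^ (2 * l) ≤ Real.exp (E * α / x ^ 2) ^ (2 * l) :=
        pow_le_pow_left₀ (by positivity) h1 _
      have h3 : Real.exp (E * α / x ^ 2) ^ (2 * l) = Real.exp ((2 * l : ℕ) * (E * α / x ^ 2)) := by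
        rw [← Real.exp_nat_mul]
      have h4 : ((2 * l : ℕ) : ℝ) * (E * α / x ^ 2) ≤ (2 * x ^ 3 / α + 2) * (E * α / x ^ 2) :=
        mul_le_mul_of_nonneg_right hceil (by positivity)
      have h5 : (2 * x ^ 3 / α + 2) * (E * α / x ^ 2) = 2 * E * x + 2 * E * α / x ^ 2 := by
        field_simp
      calc (E * lam) ^ (2 * l) ≤ Real.exp ((2 * l : ℕ) * (E * α / x ^ 2)) := h3 ▸ h2
        _ ≤ Real.exp (2 * E * x + 2 * E * α / x ^ 2) := by
            apply Real.exp_le_exp.2; rw [← h5]; exact h4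
    -- combine
    have hBle : (n : ℝ) ≤ Real.exp x := le_of_eq hB
    have t1 : (n : ℝ) * Real.exp (-(lam⁻¹ * (3 * x)))
        ≤ Real.exp x * Real.exp (-(3 * E * x) + 3 * E ^ 2 * α / x) :=
      mul_le_mul hBle hC (Real.exp_nonneg _) (Real.exp_nonneg _)
    have t2 : (n : ℝ) * Real.exp (-(lam⁻¹ * (3 * x))) * (E * lam) ^ (2 * l)
        ≤ Real.exp x * Real.exp (-(3 * E * x) + 3 * E ^ 2 * α / x) *
            Real.exp (2 * E * x + 2 * E * α / x ^ 2) :=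
      mul_le_mul t1 hD (by positivity) (by positivity)
    have t3 : ((2 * l : ℕ) : ℝ) * ((n : ℝ) * Real.exp (-(lam⁻¹ * (3 * x))) * (E * lam) ^ (2 * l))
        ≤ Real.exp (Real.log (2 * x ^ 3 / α + 2)) *
            (Real.exp x * Real.exp (-(3 * E * x) + 3 * E ^ 2 * α / x) *
              Real.exp (2 * E * x + 2 * E * α / x ^ 2)) :=
      mul_le_mul hA t2 (by positivity) (Real.exp_nonneg _)
    have hBeq : Breal α n
        = ((2 * l : ℕ) : ℝ) * ((n : ℝ) * Real.exp (-(lam⁻¹ * (3 * x))) * (E * lam) ^ (2 * l)) := by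
      rw [Breal, ← hx, ← hlamdef, ← hl, ← hE]
    have hEexp : Real.exp (Real.log (2 * x ^ 3 / α + 2)) *
        (Real.exp x * Real.exp (-(3 * E * x) + 3 * E ^ 2 * α / x) *
          Real.exp (2 * E * x + 2 * E * α / x ^ 2)) = Real.exp (Hfun α x) := by
      rw [← Real.exp_add, ← Real.exp_add, ← Real.exp_add, Hfun, hE]
    rw [hBeq, ← hEexp]
    exact t3
  have htail : Tendsto (fun n : ℕ => Real.exp (Hfun α (Real.log n))) atTop (nhds 0) := by
    apply Real.tendsto_exp_atBot.comp
    apply (Hfun_tendsto α hα).comp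
    exact Real.tendsto_log_atTop.comp tendsto_natCast_atTop_atTop
  exact squeeze_zero' (Eventually.of_forall fun n => breal_nonneg α hα n) hub htail

/-- Lemma 2.4: for λ_n = e⁻¹ + α (log n)⁻² and ℓ_n = ⌈(log n)³/α⌉, the probability that
some path of length ℓ' ∈ [ℓ_n, 2ℓ_n) has weight at most λ_n ℓ' and deviation at least
3 log n tends to zero. -/
theorem no_light_path_with_large_deviation (α : ℝ) (hα : 0 < α) :
    Tendsto (fun n : ℕ =>
        P n {ω | ∃ ℓ' : ℕ, ⌈(Real.log n) ^ 3 / α⌉₊ ≤ ℓ' ∧ ℓ' < 2 * ⌈(Real.log n) ^ 3 / α⌉₊ ∧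
          ∃ γ : Path n ℓ',
            weight ω γ ≤ (Real.exp (-1) + α * ((Real.log n) ^ 2)⁻¹) * ℓ' ∧
            3 * Real.log n ≤ deviation ω γ})
      atTop (nhds 0) := by
  have h0 : Tendsto (fun n : ℕ => ENNReal.ofReal (Breal α n)) atTop (nhds 0) := by
    have := ENNReal.tendsto_ofReal (breal_tendsto α hα)
    simpa using this
  refine tendsto_of_tendsto_of_tendsto_of_le_of_le' tendsto_const_nhds h0
    (Eventually.of_forall fun n => zero_le) ?_
  filter_upwards [eventually_ge_atTop 2] with n hn
  exact measure_bound α hα n hn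

end Paper
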